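/- Let 0 < α < 2. For every real x ≠ 0 and every y ∈ ℝ, the function H₁(x,y) = −|x|^{α−2}·y + ∫₀^y (x² + s²)^{(α−2)/2} ds satisfies |H₁(x,y)| ≤ ((2−α)/6)·|y|³·|x|^{α−4}. (In particular, for fixed y, H₁(x,y) = O(|x|^{α−4}) as |x| → ∞, which is the decay estimate guaranteeing convergence of the nonlinear terms in the regularized two-front GSQG contour dynamics equations.) -/

import Mathlib

open MeasureTheory intervalIntegral Set
open scoped Interval

lemma rpow_diff_bound (A h β : ℝ) (hA : 0 < A) (hh : 0 ≤ h) (hβ0 : 0 ≤ β) (hβ1 : β ≤ 1) :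
    |(A + h) ^ (-β) - A ^ (-β)| ≤ β * h * A ^ (-β - 1) := by
  have hAh : 0 < A + h := by linarith
  have h1 : (A + h) ^ (-β) ≤ A ^ (-β) :=
    Real.rpow_le_rpow_of_nonpos hA (by linarith) (by linarith)
  rw [abs_sub_comm, abs_of_nonneg (by linarith)]
  have hne : (A + h) ^ β ≠ 0 := (Real.rpow_pos_of_pos hAh β).ne'
  have hAne : A ^ β ≠ 0 := (Real.rpow_pos_of_pos hA β).ne'
  have bern : (1 + h / A) ^ β ≤ 1 + β * (h / A) :=
    rpow_one_add_le_one_add_mul_self (by nlinarith [div_nonneg hh hA.le]) hβ0 hβ1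
  have e1 : A ^ (-β) = (A + h) ^ (-β) * (1 + h / A) ^ β := by
    rw [show (1 : ℝ) + h / A = (A + h) / A by field_simp,
      Real.div_rpow hAh.le hA.le, Real.rpow_neg hAh.le, Real.rpow_neg hA.le]
    field_simp
  have e2 : A ^ (-β - 1) = A ^ (-β) / A := by
    rw [show -β - 1 = -β + (-1) by ring, Real.rpow_add hA, Real.rpow_neg_one]
    ring
  have step : A ^ (-β) ≤ (A + h) ^ (-β) * (1 + β * (h / A)) := by
    rw [e1]
    exact mul_le_mul_of_nonneg_left bern (Real.rpow_pos_of_pos hAh _).le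
  have step2 : (A + h) ^ (-β) * (1 + β * (h / A)) ≤
      (A + h) ^ (-β) + β * (h / A) * A ^ (-β) := by
    have : (A + h) ^ (-β) * (β * (h / A)) ≤ A ^ (-β) * (β * (h / A)) :=
      mul_le_mul_of_nonneg_right h1 (by positivity)
    nlinarith
  have h3 := step.trans step2
  rw [e2]
  have h4 : β * (h / A) * A ^ (-β) = β * h * (A ^ (-β) / A) := by
    field_simp
  linarith

/-- For `0 < α < 2`, `x ≠ 0`, and `y ∈ ℝ`, the function
`H₁(x,y) = −|x|^{α−2}·y + ∫₀^y (x² + s²)^{(α−2)/2} ds` satisfies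
`|H₁(x,y)| ≤ ((2−α)/6)·|y|³·|x|^{α−4}`. -/
theorem H1_bound (α : ℝ) (h0 : 0 < α) (h2 : α < 2) (x y : ℝ) (hx : x ≠ 0) :
    |(-(|x| ^ (α - 2)) * y + ∫ s in (0 : ℝ)..y, (x ^ 2 + s ^ 2) ^ ((α - 2) / 2))| ≤
      ((2 - α) / 6) * |y| ^ 3 * |x| ^ (α - 4) := by
  have hx2 : (0 : ℝ) < x ^ 2 := by positivity
  set f : ℝ → ℝ := fun s => (x ^ 2 + s ^ 2) ^ ((α - 2) / 2) - |x| ^ (α - 2) with hf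
  set B : ℝ → ℝ := fun s => (2 - α) / 2 * |x| ^ (α - 4) * s ^ 2 with hB
  -- rpow identity
  have hid : ∀ p : ℝ, (x ^ 2) ^ p = |x| ^ (2 * p) := by
    intro p
    rw [← sq_abs, ← Real.rpow_natCast_mul (abs_nonneg x) 2 p]
    norm_num
  have hc1 : (x ^ 2) ^ (-((2 - α) / 2)) = |x| ^ (α - 2) := by
    rw [hid, show 2 * -((2 - α) / 2) = α - 2 by ring]
  have hc2 : (x ^ 2) ^ (-((2 - α) / 2) - 1) = |x| ^ (α - 4) := by
    rw [hid, show 2 * (-((2 - α) / 2) - 1) = α - 4 by ring]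
  -- continuity
  have hg : Continuous fun s : ℝ => (x ^ 2 + s ^ 2) ^ ((α - 2) / 2) := by
    apply Continuous.rpow_const (by continuity)
    intro s
    left
    positivity
  have hfc : Continuous f := hg.sub continuous_const
  have hBc : Continuous B := by
    apply Continuous.mul continuous_const
    exact continuous_pow 2
  -- pointwise bound
  have hpt : ∀ s : ℝ, |f s| ≤ B s := by
    intro s
    have := rpow_diff_bound (x ^ 2) (s ^ 2) ((2 - α) / 2) hx2 (by positivity)
      (by linarith) (by linarith)
    rw [hc1, hc2] at this
    simp only [hf, hB]
    rw [show (α - 2) / 2 = -((2 - α) / 2) by ring]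
    calc |(x ^ 2 + s ^ 2) ^ (-((2 - α) / 2)) - |x| ^ (α - 2)| ≤
        (2 - α) / 2 * s ^ 2 * |x| ^ (α - 4) := this
      _ = (2 - α) / 2 * |x| ^ (α - 4) * s ^ 2 := by ring
  -- rewrite expression as single integral
  have heq : -(|x| ^ (α - 2)) * y + (∫ s in (0 : ℝ)..y, (x ^ 2 + s ^ 2) ^ ((α - 2) / 2)) =
      ∫ s in (0 : ℝ)..y, f s := by
    rw [hf]
    rw [intervalIntegral.integral_sub (hg.intervalIntegrable _ _) (intervalIntegrable_const),
      intervalIntegral.integral_const]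
    simp [smul_eq_mul]
    ring
  rw [heq]
  have step1 : |∫ s in (0 : ℝ)..y, f s| ≤ ∫ s in Ι (0 : ℝ) y, |f s| := by
    have := intervalIntegral.norm_integral_le_integral_norm_uIoc
      (f := f) (a := (0 : ℝ)) (b := y) (μ := volume)
    simpa [Real.norm_eq_abs] using this
  have step2 : ∫ s in Ι (0 : ℝ) y, |f s| ≤ ∫ s in Ι (0 : ℝ) y, B s := by
    apply setIntegral_mono_on
    · exact (hfc.abs.integrableOn_Ioc)
    · exact hBc.integrableOn_Ioc
    · exact measurableSet_uIoc
    · exact fun s _ => hpt s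
  have step3 : ∫ s in Ι (0 : ℝ) y, B s = (2 - α) / 6 * |y| ^ 3 * |x| ^ (α - 4) := by
    rcases le_total 0 y with hy | hy
    · rw [uIoc_of_le hy, ← intervalIntegral.integral_of_le hy, hB]
      rw [intervalIntegral.integral_const_mul, integral_pow]
      rw [abs_of_nonneg hy]
      norm_num
      ring
    · rw [uIoc_of_ge hy, ← intervalIntegral.integral_of_le hy, hB]
      rw [intervalIntegral.integral_const_mul, integral_pow]
      rw [abs_of_nonpos hy]
      norm_num
      ring
  linarith [step1.trans step2]
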